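/- arXiv:1504.01701 — 2 statements merged into one kernel-verified Lean document; each statement's English description precedes it below -/
import Mathlib

section
/- For every natural number a ≥ 1, the function d ↦ μ_a(d) defines a probability measure on ℤ, i.e. μ_a(d) ≥ 0 for all d and Σ_{d∈ℤ} μ_a(d) = 1. -/
open Filter

/-- `s2 n` is the number of digits 1 in the binary expansion of `n`. -/
def s2 (n : ℕ) : ℕ := (Nat.digits 2 n).sum

/-- `HasMu a d L` means that the density of `{x : s2 (x+a) - s2 x = d}` exists
and equals `L`. -/
def HasMu (a : ℕ) (d : ℤ) (L : ℝ) : Prop :=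
  Tendsto
    (fun N : ℕ =>
      (((Finset.range (N + 1)).filter
          (fun x => (s2 (x + a) : ℤ) - s2 x = d)).card : ℝ) / N)
    atTop (nhds L)

lemma digits_len_le {k r : ℕ} (hr : r < 2 ^ k) : (Nat.digits 2 r).length ≤ k := by
  rcases Nat.eq_zero_or_pos r with rfl | hr0
  · simp
  · rw [Nat.digits_len 2 r (by norm_num) hr0.ne']
    have := Nat.log_lt_of_lt_pow hr0.ne' hr
    omega

lemma s2_le {k r : ℕ} (hr : r < 2 ^ k) : s2 r ≤ k := by
  have h1 : (Nat.digits 2 r).sum ≤ (Nat.digits 2 r).length • 1 :=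
    List.sum_le_card_nsmul _ 1 (fun x hx => by
      have := Nat.digits_lt_base (by norm_num) hx; omega)
  exact h1.trans (by simpa using digits_len_le hr)

lemma s2_split {k q r : ℕ} (hr : r < 2 ^ k) : s2 (r + 2 ^ k * q) = s2 r + s2 q := by
  rcases Nat.eq_zero_or_pos q with rfl | hq
  · simp [s2]
  · have hlen : (Nat.digits 2 r).length ≤ k := digits_len_le hr
    have := Nat.digits_append_zeroes_append_digits (b := 2) (k := k - (Nat.digits 2 r).length)
      (m := q) (n := r) (by norm_num) hq
    rw [Nat.add_sub_cancel' hlen] at this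
    unfold s2
    rw [← this]
    simp

lemma window_mem (a x m : ℕ) (hx : x % 2 ^ m + a < 2 ^ m) :
    (s2 (x + a) : ℤ) - s2 x ∈ Finset.Icc (-(m : ℤ)) (m : ℤ) := by
  set M := 2 ^ m with hM
  have hxeq : x = x % M + M * (x / M) := (Nat.mod_add_div x M).symm
  have hrm : x % M < M := Nat.mod_lt _ (by positivity)
  have h1 : s2 x = s2 (x % M) + s2 (x / M) := by
    conv_lhs => rw [hxeq]
    exact s2_split hrm
  have h2 : s2 (x + a) = s2 (x % M + a) + s2 (x / M) := by
    have : x + a = (x % M + a) + M * (x / M) := by omega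
    rw [this]; exact s2_split hx
  have b1 : s2 (x % M) ≤ m := s2_le hrm
  have b2 : s2 (x % M + a) ≤ m := s2_le hx
  simp only [Finset.mem_Icc]
  push_cast [h1, h2]
  omega

lemma card_mod_ge (N M B : ℕ) (hM : 0 < M) :
    ((Finset.range (N + 1)).filter (fun x => M - B ≤ x % M)).card ≤ (N / M + 1) * B := by
  classical
  have hsub : (Finset.range (N + 1)).filter (fun x => M - B ≤ x % M) ⊆
      ((Finset.range (N / M + 1)) ×ˢ (Finset.Ico (M - B) M)).image
        (fun p => M * p.1 + p.2) := by
    intro x hx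
    simp only [Finset.mem_filter, Finset.mem_range] at hx
    refine Finset.mem_image.mpr ⟨(x / M, x % M), ?_, Nat.div_add_mod x M⟩
    simp only [Finset.mem_product, Finset.mem_range, Finset.mem_Ico]
    refine ⟨?_, hx.2, Nat.mod_lt _ hM⟩
    have := Nat.div_le_div_right (c := M) (Nat.lt_succ_iff.mp hx.1)
    omega
  calc _ ≤ _ := Finset.card_le_card hsub
    _ ≤ _ := Finset.card_image_le
    _ ≤ (N / M + 1) * B := by
        rw [Finset.card_product, Finset.card_range, Nat.card_Ico]
        have : M - (M - B) ≤ B := by omega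
        exact Nat.mul_le_mul_left _ this

lemma sum_card_eq (a N : ℕ) (S : Finset ℤ) :
    ∑ d ∈ S, ((Finset.range (N + 1)).filter
        (fun x => (s2 (x + a) : ℤ) - s2 x = d)).card =
      ((Finset.range (N + 1)).filter
        (fun x => ((s2 (x + a) : ℤ) - s2 x) ∈ S)).card := by
  classical
  rw [Finset.card_eq_sum_card_fiberwise
    (s := (Finset.range (N + 1)).filter (fun x => ((s2 (x + a) : ℤ) - s2 x) ∈ S))
    (f := fun x => (s2 (x + a) : ℤ) - s2 x) (t := S)
    (fun x hx => (Finset.mem_filter.mp hx).2)]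
  refine Finset.sum_congr rfl (fun d hd => ?_)
  congr 1
  rw [Finset.filter_filter]
  exact Finset.filter_congr (fun x _ => by
    constructor
    · exact fun h => ⟨h ▸ hd, h⟩
    · exact fun h => h.2)

theorem mu_prob_measure (a : ℕ) (ha : 1 ≤ a) (μ : ℤ → ℝ)
    (hμ : ∀ d : ℤ, HasMu a d (μ d)) :
    (∀ d : ℤ, 0 ≤ μ d) ∧ HasSum μ 1 := by
  classical
  set cnt : ℤ → ℕ → ℕ := fun d N => ((Finset.range (N + 1)).filter
      (fun x => (s2 (x + a) : ℤ) - s2 x = d)).card with hcnt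
  have hnn : ∀ d : ℤ, 0 ≤ μ d := fun d => ge_of_tendsto' (hμ d) (fun N => by positivity)
  -- limit of 1 + 1/N
  have hone : Tendsto (fun N : ℕ => 1 + ((N : ℝ))⁻¹) atTop (nhds 1) := by
    simpa using (tendsto_const_nhds (x := (1:ℝ)) (f := atTop)).add
      tendsto_inv_atTop_nhds_zero_nat
  -- upper bound for partial sums
  have hub : ∀ S : Finset ℤ, ∑ d ∈ S, μ d ≤ 1 := by
    intro S
    have hT : Tendsto (fun N : ℕ => ∑ d ∈ S, (cnt d N : ℝ) / N) atTop
        (nhds (∑ d ∈ S, μ d)) := tendsto_finset_sum _ (fun d _ => hμ d)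
    refine le_of_tendsto_of_tendsto hT hone ?_
    filter_upwards [eventually_ge_atTop 1] with N hN
    have hNpos : (0 : ℝ) < N := by exact_mod_cast hN
    have hcard : (∑ d ∈ S, cnt d N : ℕ) ≤ N + 1 := by
      rw [hcnt, sum_card_eq]
      exact (Finset.card_filter_le _ _).trans (by simp)
    rw [← Finset.sum_div, div_le_iff₀ hNpos]
    have : (∑ d ∈ S, (cnt d N : ℝ)) ≤ (N : ℝ) + 1 := by
      rw [← Nat.cast_sum]; exact_mod_cast hcard
    calc (∑ d ∈ S, (cnt d N : ℝ)) ≤ (N : ℝ) + 1 := this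
      _ = (1 + (N:ℝ)⁻¹) * N := by field_simp
  -- lower bound for window sums
  have hlb : ∀ m : ℕ, 1 - (a : ℝ) / 2 ^ m ≤
      ∑ d ∈ Finset.Icc (-(m : ℤ)) (m : ℤ), μ d := by
    intro m
    set W : Finset ℤ := Finset.Icc (-(m : ℤ)) (m : ℤ) with hW
    have hT : Tendsto (fun N : ℕ => ∑ d ∈ W, (cnt d N : ℝ) / N) atTop
        (nhds (∑ d ∈ W, μ d)) := tendsto_finset_sum _ (fun d _ => hμ d)
    have hv : Tendsto (fun N : ℕ => 1 + ((N:ℝ))⁻¹ - (a:ℝ)/2^m - a * ((N:ℝ))⁻¹)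
        atTop (nhds (1 - (a : ℝ) / 2 ^ m)) := by
      have := ((hone.sub (tendsto_const_nhds (x := (a:ℝ)/2^m))).sub
        (tendsto_inv_atTop_nhds_zero_nat.const_mul (a:ℝ)))
      simpa using this
    refine le_of_tendsto_of_tendsto hv hT ?_
    filter_upwards [eventually_ge_atTop 1] with N hN
    have hNpos : (0 : ℝ) < N := by exact_mod_cast hN
    -- nat counting inequality
    have hpart : N + 1 ≤ (∑ d ∈ W, cnt d N) + (N / 2 ^ m + 1) * a := by
      have hsplit := Finset.card_filter_add_card_filter_not
        (s := Finset.range (N + 1))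
        (p := fun x => ((s2 (x + a) : ℤ) - s2 x) ∈ W)
      have hbad : ((Finset.range (N + 1)).filter
          (fun x => ¬ ((s2 (x + a) : ℤ) - s2 x) ∈ W)).card ≤ (N / 2 ^ m + 1) * a := by
        refine le_trans (Finset.card_le_card ?_) (card_mod_ge N (2 ^ m) a (by positivity))
        intro x hx
        simp only [Finset.mem_filter] at hx ⊢
        refine ⟨hx.1, ?_⟩
        by_contra hc
        have hx2 : x % 2 ^ m + a < 2 ^ m := by omega
        exact hx.2 (window_mem a x m hx2)
      have hgood : (∑ d ∈ W, cnt d N) = ((Finset.range (N + 1)).filter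
          (fun x => ((s2 (x + a) : ℤ) - s2 x) ∈ W)).card := by
        rw [hcnt]; exact sum_card_eq a N W
      have hrange : (Finset.range (N + 1)).card = N + 1 := by simp
      omega
    -- convert to real inequality
    rw [← Finset.sum_div]
    have h1 : ((N : ℝ) + 1) ≤ (∑ d ∈ W, (cnt d N : ℝ)) + ((N : ℝ) / 2 ^ m + 1) * a := by
      have h2 : ((N / 2 ^ m : ℕ) : ℝ) ≤ (N : ℝ) / 2 ^ m := by
        have h := Nat.cast_div_le (α := ℝ) (m := N) (n := 2 ^ m)
        push_cast at h
        exact h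
      have h3 : ((N : ℝ) + 1) ≤ (∑ d ∈ W, (cnt d N : ℝ)) + (((N / 2 ^ m : ℕ) : ℝ) + 1) * a := by
        rw [← Nat.cast_sum]; exact_mod_cast hpart
      nlinarith [(Nat.cast_nonneg a : (0:ℝ) ≤ a), h2, h3]
    have hinv : ((N:ℝ))⁻¹ * (N:ℝ) = 1 := inv_mul_cancel₀ hNpos.ne'
    have e : ((a:ℝ)/2^m) * N = (N:ℝ)/2^m * a := by ring
    rw [le_div_iff₀ hNpos]
    nlinarith [h1, hinv, e]
  refine ⟨hnn, ?_⟩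
  apply hasSum_of_isLUB_of_nonneg (1 : ℝ) hnn
  constructor
  · rintro _ ⟨S, rfl⟩
    exact hub S
  · intro b hb
    have hbm : ∀ m : ℕ, 1 - (a : ℝ) / 2 ^ m ≤ b := fun m =>
      (hlb m).trans (hb ⟨Finset.Icc (-(m : ℤ)) (m : ℤ), rfl⟩)
    have ht : Tendsto (fun m : ℕ => 1 - (a : ℝ) / 2 ^ m) atTop (nhds 1) := by
      have h0 : Tendsto (fun m : ℕ => (a : ℝ) / 2 ^ m) atTop (nhds 0) := by
        have := (tendsto_pow_atTop_nhds_zero_of_lt_one (by norm_num : (0:ℝ) ≤ 1/2)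
          (by norm_num : (1:ℝ)/2 < 1)).const_mul (a : ℝ)
        simpa [div_eq_mul_inv, inv_pow, one_div] using this
      simpa using (tendsto_const_nhds (x := (1:ℝ)) (f := atTop)).sub h0
    exact le_of_tendsto ht (Eventually.of_forall hbm)
end

section
/- For every natural number a ≥ 1 and every integer d, μ_{2a+1}(d) = (1/2)·μ_a(d-1) + (1/2)·μ_{a+1}(d+1). -/
open Filter

lemma s2_two_mul (n : ℕ) : s2 (2 * n) = s2 n := by
  rcases Nat.eq_zero_or_pos n with rfl | hn
  · simp [s2]
  · unfold s2
    rw [Nat.digits_def' (by norm_num : 1 < 2) (by omega)]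
    simp [Nat.mul_mod_right, Nat.mul_div_cancel_left]

lemma s2_two_mul_add_one (n : ℕ) : s2 (2 * n + 1) = s2 n + 1 := by
  unfold s2
  rw [Nat.digits_def' (by norm_num : 1 < 2) (by omega)]
  have h1 : (2 * n + 1) % 2 = 1 := by omega
  have h2 : (2 * n + 1) / 2 = n := by omega
  rw [h1, h2]
  simp [add_comm]

lemma sum_split (f : ℕ → ℕ) (N : ℕ) :
    ∑ x ∈ Finset.range N, f x
      = (∑ y ∈ Finset.range ((N + 1) / 2), f (2 * y))
        + ∑ y ∈ Finset.range (N / 2), f (2 * y + 1) := by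
  induction N with
  | zero => simp
  | succ n ih =>
    rw [Finset.sum_range_succ, ih]
    rcases Nat.even_or_odd n with ⟨k, hk⟩ | ⟨k, hk⟩
    · have e1 : (n + 1 + 1) / 2 = k + 1 := by omega
      have e2 : (n + 1) / 2 = k := by omega
      have e3 : n / 2 = k := by omega
      have e4 : n = 2 * k := by omega
      rw [e1, e2, e3, Finset.sum_range_succ, e4]
      omega
    · have e1 : (n + 1 + 1) / 2 = k + 1 := by omega
      have e2 : (n + 1) / 2 = k + 1 := by omega
      have e3 : n / 2 = k := by omega
      have e4 : n = 2 * k + 1 := by omega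
      rw [e1, e2, e3, Finset.sum_range_succ, Finset.sum_range_succ, e4]
      omega

lemma count_split (P : ℕ → Prop) [DecidablePred P] (N : ℕ) :
    ((Finset.range N).filter P).card
      = ((Finset.range ((N + 1) / 2)).filter (fun y => P (2 * y))).card
        + ((Finset.range (N / 2)).filter (fun y => P (2 * y + 1))).card := by
  simp only [Finset.card_filter]
  exact sum_split (fun x => if P x then 1 else 0) N

lemma tendsto_nat_div_two_atTop : Tendsto (fun N : ℕ => N / 2) atTop atTop :=
  tendsto_atTop_atTop.mpr (fun b => ⟨2 * b, fun n hn => by omega⟩)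

lemma tendsto_nat_sub_one_div_two_atTop : Tendsto (fun N : ℕ => (N - 1) / 2) atTop atTop :=
  tendsto_atTop_atTop.mpr (fun b => ⟨2 * b + 1, fun n hn => by omega⟩)

lemma ratio_half (g : ℕ → ℕ) (hg : ∀ N, N ≤ 2 * g N + 2 ∧ 2 * g N ≤ N) :
    Tendsto (fun N : ℕ => ((g N : ℝ)) / N) atTop (nhds (1 / 2)) := by
  have hlo : Tendsto (fun N : ℕ => 1 / 2 - 1 / (N : ℝ)) atTop (nhds (1 / 2)) := by
    have := Filter.Tendsto.sub (tendsto_const_nhds (x := (1/2 : ℝ)) (f := atTop (α := ℕ))) tendsto_one_div_atTop_nhds_zero_nat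
    simpa using this
  apply tendsto_of_tendsto_of_tendsto_of_le_of_le' hlo tendsto_const_nhds
  · filter_upwards [eventually_ge_atTop 1] with N hN
    have h : (N : ℝ) ≤ 2 * g N + 2 := by exact_mod_cast (hg N).1
    have hN' : (0 : ℝ) < N := by positivity
    rw [sub_le_iff_le_add, ← add_div, le_div_iff₀ hN']
    linarith
  · filter_upwards [eventually_ge_atTop 1] with N hN
    have h : 2 * (g N : ℝ) ≤ N := by exact_mod_cast (hg N).2
    have hN' : (0 : ℝ) < N := by positivity
    rw [div_le_iff₀ hN']
    linarith

theorem mu_two_mul_add_one (a : ℕ) (ha : 1 ≤ a) (d : ℤ) (L1 L2 L3 : ℝ)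
    (h1 : HasMu (2 * a + 1) d L1) (h2 : HasMu a (d - 1) L2)
    (h3 : HasMu (a + 1) (d + 1) L3) :
    L1 = (1 / 2) * L2 + (1 / 2) * L3 := by
  unfold HasMu at h1 h2 h3
  set c1 : ℕ → ℕ := fun N =>
    ((Finset.range (N + 1)).filter (fun x => (s2 (x + (2 * a + 1)) : ℤ) - s2 x = d)).card with hc1
  set c2 : ℕ → ℕ := fun N =>
    ((Finset.range (N + 1)).filter (fun x => (s2 (x + a) : ℤ) - s2 x = d - 1)).card with hc2
  set c3 : ℕ → ℕ := fun N =>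
    ((Finset.range (N + 1)).filter (fun x => (s2 (x + (a + 1)) : ℤ) - s2 x = d + 1)).card with hc3
  have key : ∀ N : ℕ, 1 ≤ N → c1 N = c2 (N / 2) + c3 ((N - 1) / 2) := by
    intro N hN
    simp only [hc1, hc2, hc3]
    rw [count_split]
    congr 1
    · have e : (N + 1 + 1) / 2 = N / 2 + 1 := by omega
      rw [e]
      apply congrArg Finset.card
      apply Finset.filter_congr
      intro y _
      have h1' : 2 * y + (2 * a + 1) = 2 * (y + a) + 1 := by ring
      rw [h1', s2_two_mul_add_one, s2_two_mul]
      push_cast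
      constructor <;> intro <;> omega
    · have e : (N + 1) / 2 = (N - 1) / 2 + 1 := by omega
      rw [e]
      apply congrArg Finset.card
      apply Finset.filter_congr
      intro y _
      have h1' : 2 * y + 1 + (2 * a + 1) = 2 * (y + a + 1) := by ring
      rw [h1', s2_two_mul, s2_two_mul_add_one, show y + a + 1 = y + (a + 1) from by ring]
      push_cast
      constructor <;> intro <;> omega
  have hA : Tendsto (fun N : ℕ => (c2 (N / 2) : ℝ) / N) atTop (nhds ((1 / 2) * L2)) := by
    have comp2 := h2.comp tendsto_nat_div_two_atTop
    have r2 := ratio_half (fun N => N / 2) (fun N => by show N ≤ 2 * (N / 2) + 2 ∧ 2 * (N / 2) ≤ N; omega)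
    have hmul := comp2.mul r2
    have heq : (fun N : ℕ => (c2 (N / 2) : ℝ) / ((N / 2 : ℕ) : ℝ) * (((N / 2 : ℕ) : ℝ) / N))
        =ᶠ[atTop] fun N : ℕ => (c2 (N / 2) : ℝ) / N := by
      filter_upwards [eventually_ge_atTop 2] with N hN
      have hne : ((N / 2 : ℕ) : ℝ) ≠ 0 := Nat.cast_ne_zero.mpr (by omega)
      field_simp
    have := hmul.congr' heq
    simpa [mul_comm] using this
  have hB : Tendsto (fun N : ℕ => (c3 ((N - 1) / 2) : ℝ) / N) atTop (nhds ((1 / 2) * L3)) := by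
    have comp3 := h3.comp tendsto_nat_sub_one_div_two_atTop
    have r3 := ratio_half (fun N => (N - 1) / 2) (fun N => by show N ≤ 2 * ((N - 1) / 2) + 2 ∧ 2 * ((N - 1) / 2) ≤ N; omega)
    have hmul := comp3.mul r3
    have heq : (fun N : ℕ => (c3 ((N - 1) / 2) : ℝ) / (((N - 1) / 2 : ℕ) : ℝ) * ((((N - 1) / 2 : ℕ) : ℝ) / N))
        =ᶠ[atTop] fun N : ℕ => (c3 ((N - 1) / 2) : ℝ) / N := by
      filter_upwards [eventually_ge_atTop 3] with N hN
      have hne : (((N - 1) / 2 : ℕ) : ℝ) ≠ 0 := Nat.cast_ne_zero.mpr (by omega)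
      field_simp
    have := hmul.congr' heq
    simpa [mul_comm] using this
  have hsum := hA.add hB
  have heq2 : (fun N : ℕ => (c2 (N / 2) : ℝ) / N + (c3 ((N - 1) / 2) : ℝ) / N)
      =ᶠ[atTop] fun N : ℕ => (c1 N : ℝ) / N := by
    filter_upwards [eventually_ge_atTop 1] with N hN
    rw [key N hN]
    push_cast
    ring
  exact tendsto_nhds_unique h1 (hsum.congr' heq2)
end
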